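/- For every integer n ≥ 1 and every ξ ∈ ℝ^n, the LogSumExp obstacle function converges to the supremum norm as the smoothing parameter tends to infinity: lim_{α → ∞} o^lse(ξ; α) = ‖ξ‖_∞ = max_i |ξ_i|. In particular, the sublevel sets O^lse(α) recover the unit hypercube in the limit α → ∞. -/

import Mathlib

/-- Normalization constant `η_lse(α) = 1 / log((1/2)(exp α + exp (−α)))`. -/
noncomputable def etaLse (α : ℝ) : ℝ :=
  1 / Real.log ((1 / 2) * (Real.exp α + Real.exp (-α)))

/-- The LogSumExp obstacle function
`o^lse(ξ; α) = η_lse(α) * log((1/(2n)) ∑ i, (exp (α ξ_i) + exp (−α ξ_i)))`. -/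
noncomputable def oLse (n : ℕ) (α : ℝ) (ξ : Fin n → ℝ) : ℝ :=
  etaLse α * Real.log ((1 / (2 * (n : ℝ))) * ∑ i, (Real.exp (α * ξ i) + Real.exp (-(α * ξ i))))

/-- For every `n ≥ 1` and `ξ ∈ ℝ^n`, the LogSumExp obstacle function converges to
the supremum norm as the smoothing parameter tends to infinity:
`lim_{α → ∞} o^lse(ξ; α) = ‖ξ‖_∞ = max_i |ξ_i|`. -/
theorem oLse_tendsto_supNorm (n : ℕ) (hn : 1 ≤ n) (ξ : Fin n → ℝ) :
    Filter.Tendsto (fun α : ℝ => oLse n α ξ) Filter.atTop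
      (nhds (Finset.univ.sup' ⟨⟨0, hn⟩, Finset.mem_univ _⟩ (fun i => |ξ i|))) := by
  have hne : (Finset.univ : Finset (Fin n)).Nonempty := ⟨⟨0, hn⟩, Finset.mem_univ _⟩
  set M := Finset.univ.sup' hne (fun i => |ξ i|) with hMdef
  have hn0 : (0:ℝ) < n := by exact_mod_cast hn
  have hM0 : 0 ≤ M := le_trans (abs_nonneg (ξ ⟨0, hn⟩))
    (Finset.le_sup' (fun j => |ξ j|) (Finset.mem_univ (⟨0, hn⟩ : Fin n)))
  have hn1 : (1:ℝ) ≤ n := by exact_mod_cast hn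
  have hlog2 : (0:ℝ) ≤ Real.log 2 := Real.log_nonneg one_le_two
  have hc0 : 0 ≤ Real.log (2 * (n:ℝ)) := Real.log_nonneg (by linarith)
  set C := Real.log (2 * (n:ℝ)) + M * Real.log 2 with hC
  have hC0 : 0 ≤ C := by positivity
  have key : ∀ α : ℝ, 1 ≤ α → |oLse n α ξ - M| ≤ C / (α - Real.log 2) := by
    intro α hα
    have hl2 : Real.log 2 < 0.6931471808 := Real.log_two_lt_d9
    have hd : 0 < α - Real.log 2 := by linarith
    have hα0 : (0:ℝ) ≤ α := by linarith
    set D := Real.log ((1/2) * (Real.exp α + Real.exp (-α))) with hDdef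
    have hpos : 0 < (1/2) * (Real.exp α + Real.exp (-α)) := by positivity
    have hD_up : D ≤ α := by
      have h1 : (1/2) * (Real.exp α + Real.exp (-α)) ≤ Real.exp α := by
        have := Real.exp_le_exp.mpr (neg_le_self hα0)
        linarith
      calc D ≤ Real.log (Real.exp α) := Real.log_le_log hpos h1
        _ = α := Real.log_exp α
    have hD_lo : α - Real.log 2 ≤ D := by
      have h1 : Real.exp (α - Real.log 2) ≤ (1/2) * (Real.exp α + Real.exp (-α)) := by
        rw [Real.exp_sub, Real.exp_log two_pos]
        nlinarith [Real.exp_pos (-α)]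
      calc α - Real.log 2 = Real.log (Real.exp (α - Real.log 2)) := (Real.log_exp _).symm
        _ ≤ D := Real.log_le_log (Real.exp_pos _) h1
    have hDpos : 0 < D := lt_of_lt_of_le hd hD_lo
    set S := ∑ i, (Real.exp (α * ξ i) + Real.exp (-(α * ξ i))) with hS
    have hSpos : 0 < S := Finset.sum_pos (fun i _ => by positivity) hne
    have habs : ∀ i, |ξ i| ≤ M := fun i => Finset.le_sup' (fun j => |ξ j|) (Finset.mem_univ i)
    have hS_up : S ≤ 2 * n * Real.exp (α * M) := by
      calc S ≤ ∑ _i : Fin n, 2 * Real.exp (α * M) := by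
            apply Finset.sum_le_sum
            intro i _
            have h1 : Real.exp (α * ξ i) ≤ Real.exp (α * M) :=
              Real.exp_le_exp.mpr (mul_le_mul_of_nonneg_left
                ((le_abs_self _).trans (habs i)) hα0)
            have heq : -(α * ξ i) = α * (-ξ i) := by ring
            have h2 : Real.exp (-(α * ξ i)) ≤ Real.exp (α * M) := by
              rw [heq]
              exact Real.exp_le_exp.mpr (mul_le_mul_of_nonneg_left
                ((neg_le_abs _).trans (habs i)) hα0)
            linarith
        _ = 2 * n * Real.exp (α * M) := by
            simp [Finset.sum_const, Finset.card_univ]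
            ring
    have hS_lo : Real.exp (α * M) ≤ S := by
      obtain ⟨i0, -, hi0⟩ := Finset.exists_mem_eq_sup' hne (fun i => |ξ i|)
      have hterm : Real.exp (α * M) ≤ Real.exp (α * ξ i0) + Real.exp (-(α * ξ i0)) := by
        rcases abs_cases (ξ i0) with ⟨h, -⟩ | ⟨h, -⟩
        · rw [hMdef, hi0, h]
          exact le_add_of_nonneg_right (Real.exp_pos _).le
        · rw [hMdef, hi0, h]
          have heq : α * -ξ i0 = -(α * ξ i0) := by ring
          rw [heq]
          exact le_add_of_nonneg_left (Real.exp_pos _).le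
      refine hterm.trans ?_
      rw [hS]
      exact Finset.single_le_sum (f := fun i => Real.exp (α * ξ i) + Real.exp (-(α * ξ i)))
        (fun i _ => by positivity) (Finset.mem_univ i0)
    set L := Real.log ((1/(2*(n:ℝ))) * S) with hLdef
    have h2n : (0:ℝ) < 2 * n := by positivity
    have hL_up : L ≤ α * M := by
      have h1 : (1/(2*(n:ℝ))) * S ≤ Real.exp (α * M) := by
        have := mul_le_mul_of_nonneg_left hS_up (le_of_lt (by positivity : (0:ℝ) < 1/(2*(n:ℝ))))
        calc (1/(2*(n:ℝ))) * S ≤ (1/(2*(n:ℝ))) * (2*n*Real.exp (α*M)) := this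
          _ = Real.exp (α*M) := by field_simp
      calc L ≤ Real.log (Real.exp (α*M)) := Real.log_le_log (by positivity) h1
        _ = α * M := Real.log_exp _
    have hL_lo : α * M - Real.log (2*(n:ℝ)) ≤ L := by
      have h1 : Real.exp (α*M - Real.log (2*(n:ℝ))) ≤ (1/(2*(n:ℝ))) * S := by
        rw [Real.exp_sub, Real.exp_log h2n, div_le_iff₀ h2n]
        calc Real.exp (α*M) ≤ S := hS_lo
          _ = 1/(2*(n:ℝ)) * S * (2*n) := by field_simp
      calc α*M - Real.log (2*(n:ℝ)) = Real.log (Real.exp (α*M - Real.log (2*(n:ℝ)))) :=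
            (Real.log_exp _).symm
        _ ≤ L := Real.log_le_log (Real.exp_pos _) h1
    have hform : oLse n α ξ = L / D := by
      simp only [oLse, etaLse, ← hS, ← hDdef, ← hLdef]
      exact one_div_mul_eq_div D L
    have hMD1 : M * (α - Real.log 2) ≤ M * D := mul_le_mul_of_nonneg_left hD_lo hM0
    have hMD2 : M * D ≤ M * α := mul_le_mul_of_nonneg_left hD_up hM0
    have hnum_up : L - M*D ≤ M * Real.log 2 := by nlinarith
    have hnum_lo : -Real.log (2*(n:ℝ)) ≤ L - M*D := by nlinarith
    have habs2 : |L - M*D| ≤ C := abs_le.mpr ⟨by simp only [hC]; linarith, by linarith⟩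
    have heq2 : L/D - M = (L - M*D)/D := by field_simp
    rw [hform, heq2, abs_div, abs_of_pos hDpos]
    exact div_le_div₀ hC0 habs2 hd hD_lo
  have h1 : Filter.Tendsto (fun α : ℝ => (α - Real.log 2)⁻¹) Filter.atTop (nhds 0) := by
    have := tendsto_inv_atTop_zero.comp
      (Filter.tendsto_atTop_add_const_right Filter.atTop (-Real.log 2) Filter.tendsto_id)
    simpa [sub_eq_add_neg, Function.comp_def] using this
  have hg : Filter.Tendsto (fun α : ℝ => C / (α - Real.log 2)) Filter.atTop (nhds 0) := by
    simpa [div_eq_mul_inv] using h1.const_mul C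
  have hzero : Filter.Tendsto (fun α : ℝ => oLse n α ξ - M) Filter.atTop (nhds 0) := by
    apply squeeze_zero_norm' _ hg
    filter_upwards [Filter.eventually_ge_atTop (1:ℝ)] with α hα
    simpa [Real.norm_eq_abs] using key α hα
  have := hzero.add_const M
  simpa using this
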